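/- arXiv:1103.0565 — 4 statements merged into one kernel-verified Lean document; each statement's English description precedes it below -/
import Mathlib

section
/- Let X be a scheme, x ∈ X a point, M a coherent O_X-module flat over a base S at x with s the image of x, and α : O_X → M a homomorphism such that α_x ⊗ k(s) is bijective. Then α is an isomorphism in a neighborhood of x. -/
/-!
STATEMENT 1: Let `X` be a scheme, `x ∈ X`, `M` a coherent `O_X`-module flat over the base `S`
at `x` (with `s` the image of `x`), and `α : O_X → M` a homomorphism such that
`α_x ⊗ k(s)` is bijective. Then `α` is an isomorphism in a neighbourhood of `x`.

Local formulation at the point `x`: for coherent modules on locally noetherian schemes,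
being an isomorphism in a neighbourhood of `x` is equivalent to being an isomorphism on
stalks at `x`.  So let `R = O_{S,s}` and `A = O_{X,x}` be the (noetherian) local rings,
`R → A` the local homomorphism induced by `f : X → S`, let `M` (the stalk `M_x`) be a
finitely generated `A`-module which is flat over `R`, and let `α : A → M` be `A`-linear
such that the induced map `A ⊗ k(s) → M ⊗ k(s)`, i.e.
`A/𝔪_R·A → M/𝔪_R·M`, is bijective.  Then `α` is bijective.
-/

open IsLocalRing TensorProduct

theorem stalk_iso_of_fiberwise_iso
    (R A : Type*) [CommRing R] [CommRing A]
    [IsLocalRing R] [IsLocalRing A]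
    [IsNoetherianRing R] [IsNoetherianRing A]
    [Algebra R A] [IsLocalHom (algebraMap R A)]
    (M : Type*) [AddCommGroup M] [Module A M] [Module R M] [IsScalarTower R A M]
    [Module.Finite A M] [Module.Flat R M]
    (α : A →ₗ[A] M)
    -- the ideal `𝔪_R · A` of `A`
    (I : Ideal A) (hI : I = (maximalIdeal R).map (algebraMap R A))
    (hcomp : I ≤ (I • (⊤ : Submodule A M)).comap α)
    -- `α ⊗ k(s) : A/𝔪_R A → M/𝔪_R M` is bijective
    (hfib : Function.Bijective
      (Submodule.mapQ (I : Submodule A A) (I • (⊤ : Submodule A M)) α hcomp)) :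
    Function.Bijective α := by
  classical
  set K : Ideal A := LinearMap.ker α with hK
  set J : Ideal R := maximalIdeal R with hJ
  -- `I ≤ maximalIdeal A`
  have hIm : I ≤ maximalIdeal A := by
    rw [hI, Ideal.map_le_iff_le_comap]
    intro r hr
    exact map_nonunit (algebraMap R A) r hr
  -- Surjectivity via Nakayama
  have hsurj : Function.Surjective α := by
    have htop : (⊤ : Submodule A M) ≤ LinearMap.range α ⊔ (maximalIdeal A) • ⊤ := by
      intro m _
      obtain ⟨abar, habar⟩ := hfib.2 (Submodule.Quotient.mk m)
      obtain ⟨a, rfl⟩ := Submodule.Quotient.mk_surjective _ abar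
      have h1 : (Submodule.Quotient.mk (α a) : M ⧸ I • (⊤ : Submodule A M)) = Submodule.Quotient.mk m := by
        rw [Submodule.mapQ_apply] at habar
        exact habar
    
      rw [Submodule.Quotient.eq] at h1
      refine Submodule.mem_sup.2 ⟨α a, ⟨a, rfl⟩, m - α a, ?_, by abel⟩
      have : α a - m ∈ (maximalIdeal A) • (⊤ : Submodule A M) :=
        Submodule.smul_mono_left hIm h1
      simpa using neg_mem this
    have h2 : (⊤ : Submodule A M) ≤ LinearMap.range α :=
      Submodule.le_of_le_smul_of_le_jacobson_bot (IsNoetherian.noetherian ⊤)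
        (by rw [IsLocalRing.jacobson_eq_maximalIdeal ⊥ bot_ne_top]) htop
    rw [← LinearMap.range_eq_top]
    exact top_le_iff.mp h2
  -- kernel is contained in I
  have hKI : K ≤ I := by
    intro a ha
    have h0 : Submodule.mapQ (I : Submodule A A) (I • (⊤ : Submodule A M)) α hcomp
        (Submodule.Quotient.mk a) = 0 := by
      rw [Submodule.mapQ_apply]
      have : α a = 0 := ha
      rw [this, Submodule.Quotient.mk_zero]
    have h00 : Submodule.mapQ (I : Submodule A A) (I • (⊤ : Submodule A M)) α hcomp
        (Submodule.Quotient.mk a) = Submodule.mapQ (I : Submodule A A)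
        (I • (⊤ : Submodule A M)) α hcomp 0 := by simpa using h0
    exact (Submodule.Quotient.mk_eq_zero _).mp (hfib.1 h00)
  -- the tensor maps
  let αR : A →ₗ[R] M := α.restrictScalars R
  let KR : Submodule R A := K.restrictScalars R
  let ι : KR →ₗ[R] A := KR.subtype
  let g1 : (J ⊗[R] A) →ₗ[R] A :=
    (TensorProduct.lid R A).toLinearMap ∘ₗ LinearMap.rTensor A J.subtype
  let gM : (J ⊗[R] M) →ₗ[R] M :=
    (TensorProduct.lid R M).toLinearMap ∘ₗ LinearMap.rTensor M J.subtype
  have hg1 : ∀ (j : J) (a : A), g1 (j ⊗ₜ[R] a) = ((j : R) • a : A) := fun j a => rfl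
  have hgM : ∀ (j : J) (m : M), gM (j ⊗ₜ[R] m) = ((j : R) • m : M) := fun j m => rfl
  have hcommute : gM ∘ₗ LinearMap.lTensor J αR = αR ∘ₗ g1 := by
    apply TensorProduct.ext'
    intro j a
    simp [gM, g1, αR]
  have hgMinj : Function.Injective gM := by
    have h1 : Function.Injective (LinearMap.rTensor M J.subtype) :=
      Module.Flat.rTensor_preserves_injective_linearMap J.subtype J.injective_subtype
    exact (TensorProduct.lid R M).injective.comp h1
  have hexact : Function.Exact ι αR := by
    rw [LinearMap.exact_iff, Submodule.range_subtype]
    rfl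
  have hexactT : Function.Exact (LinearMap.lTensor (J : Submodule R R) ι)
      (LinearMap.lTensor (J : Submodule R R) αR) :=
    lTensor_exact (J : Submodule R R) hexact hsurj
  -- K ≤ maximalIdeal A • K
  have hKmK : K ≤ (maximalIdeal A) • K := by
    intro a ha
    -- a ∈ I, so a is in the image of g1
    have haI : a ∈ J • (⊤ : Submodule R A) := by
      rw [Ideal.smul_top_eq_map]
      exact hI ▸ hKI ha
    have hξ : ∃ ξ : J ⊗[R] A, g1 ξ = a := by
      refine Submodule.smul_induction_on haI (fun r hr n _ => ⟨(⟨r, hr⟩ : J) ⊗ₜ n, rfl⟩) ?_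
      rintro x y ⟨ξ, rfl⟩ ⟨η, rfl⟩
      exact ⟨ξ + η, map_add _ _ _⟩
    obtain ⟨ξ, rfl⟩ := hξ
    have hη : LinearMap.lTensor (J : Submodule R R) αR ξ = 0 := by
      apply hgMinj
      rw [map_zero, ← LinearMap.comp_apply, hcommute, LinearMap.comp_apply]
      exact ha
    obtain ⟨ζ, rfl⟩ := (hexactT _).mp hη
    -- now g1 (lTensor ι ζ) ∈ J • KR ≤ mA • K
    have hmem : ∀ ζ : J ⊗[R] KR, g1 (LinearMap.lTensor (J : Submodule R R) ι ζ)
        ∈ ((maximalIdeal A) • K : Ideal A) := by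
      intro ζ
      induction ζ using TensorProduct.induction_on with
      | zero => simp
      | tmul j k =>
        have : g1 (LinearMap.lTensor (J : Submodule R R) ι (j ⊗ₜ k)) = (j : R) • (k : A) := rfl
        rw [this, ← algebraMap_smul A ((j : R)) ((k : A))]
        exact Submodule.smul_mem_smul
          (hIm (hI ▸ Ideal.mem_map_of_mem (algebraMap R A) j.2)) k.2
      | add x y hx hy =>
        rw [map_add, map_add]
        exact add_mem hx hy
    exact hmem ζ
  have hKbot : K = ⊥ :=
    Submodule.eq_bot_of_le_smul_of_le_jacobson_bot (maximalIdeal A) K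
      (IsNoetherian.noetherian K) hKmK
      (by rw [IsLocalRing.jacobson_eq_maximalIdeal ⊥ bot_ne_top])
  exact ⟨LinearMap.ker_eq_bot.mp hKbot, hsurj⟩
end

section
/- Let X be a noetherian scheme over a discrete valuation ring with closed fiber X_t, let M be a coherent O_X-module flat over the DVR, and let z ∈ X be a point of the closed fiber which is not an associated point of M ⊗ k(t). Then depth(M_z) ≥ 2. -/
/-!
STATEMENT 3: Let `X` be a noetherian scheme over a discrete valuation ring with closed fiber
`X_t`, `M` a coherent `O_X`-module flat over the DVR, and `z ∈ X` a point of the closed fiber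
which is not an associated point of `M ⊗ k(t)`. Then `depth (M_z) ≥ 2`.

Local formulation at the point `z`: let `R` be the DVR `O_{T,t}`, `A = O_{X,z}` the
(noetherian) local ring of `X` at `z`; since `z` lies in the closed fiber, `R → A` is a
local homomorphism.  Let `M` (the stalk `M_z`) be a finitely generated `A`-module,
flat over `R`.  The fiber `(M ⊗ k(t))_z` is `M ⧸ 𝔪_R·M`, and the hypothesis that `z` is
not an associated point of `M ⊗ k(t)` says that the maximal ideal of `A` is not an
associated prime of this quotient.  The conclusion `depth M ≥ 2` is expressed as the
existence of an `M`-regular sequence of length 2 contained in the maximal ideal of `A`.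
-/

open IsLocalRing

section AuxAssPrimes

open Submodule

variable {R' M' : Type*} [CommRing R'] [AddCommGroup M'] [Module R' M']

/-- An associated prime of `M` is an associated prime of a submodule `N` or of `M ⧸ N`. -/
lemma aux_isAssociatedPrime_or_of_submodule (N : Submodule R' M') {p : Ideal R'}
    (hp : IsAssociatedPrime p M') :
    IsAssociatedPrime p N ∨ IsAssociatedPrime p (M' ⧸ N) := by
  exact associatedPrimes.subset_union_of_exact (f := N.subtype) (g := N.mkQ)
    N.injective_subtype (LinearMap.exact_subtype_mkQ N) hp

/-- The only associated prime of the cyclic module `R ∙ x` with prime annihilator `p`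
is `p` itself. -/
lemma aux_isAssociatedPrime_span_singleton_eq {x : M'} {p q : Ideal R'}
    (hp : p = (R' ∙ x).annihilator) (hpp : p.IsPrime)
    (hq : IsAssociatedPrime q (↥(R' ∙ x))) : q = p := by
  obtain ⟨hqp, y, hy⟩ := hq
  obtain ⟨c, hc⟩ := Submodule.mem_span_singleton.mp y.2
  have hy0 : (y : M') ≠ 0 := by
    intro h0
    have : (1 : R') ∈ q := by
      rw [hy]
      refine Ideal.le_radical ?_
      rw [Submodule.mem_colon_singleton, Submodule.mem_bot]
      ext; simpa using h0
    exact hqp.ne_top (Ideal.eq_top_of_isUnit_mem _ this isUnit_one)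
  have hcP : c ∉ p := by
    intro hcp
    rw [hp, Submodule.mem_annihilator_span_singleton] at hcp
    exact hy0 (by rw [← hc, hcp])
  ext b
  rw [hy]
  constructor
  · rintro ⟨n, hb⟩
    rw [Submodule.mem_colon_singleton, Submodule.mem_bot] at hb
    have h1 : b ^ n • (y : M') = 0 := by
      have := congrArg Subtype.val hb; simpa using this
    rw [← hc, smul_smul] at h1
    have h2 : b ^ n * c ∈ p := by
      rw [hp, Submodule.mem_annihilator_span_singleton]; exact h1
    exact hpp.mem_of_pow_mem n ((hpp.mul_mem_iff_mem_or_mem.mp h2).resolve_right hcP)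
  · intro hb
    have hb' : b • x = 0 := by
      rw [hp, Submodule.mem_annihilator_span_singleton] at hb; exact hb
    refine Ideal.le_radical ?_
    rw [Submodule.mem_colon_singleton, Submodule.mem_bot]
    ext
    show b • (y : M') = 0
    rw [← hc, smul_comm, hb', smul_zero]

/-- A noetherian module over a noetherian ring has finitely many associated primes. -/
lemma aux_associatedPrimes_finite (R M : Type*) [CommRing R] [IsNoetherianRing R]
    [AddCommGroup M] [Module R M] [IsNoetherian R M] :
    (associatedPrimes R M).Finite := by
  by_contra hinf
  set S : Set (Submodule R M) := {N | ¬ (associatedPrimes R (M ⧸ N)).Finite} with hSdef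
  have hbot : (⊥ : Submodule R M) ∈ S := by
    show ¬ (associatedPrimes R (M ⧸ (⊥ : Submodule R M))).Finite
    rwa [LinearEquiv.AssociatedPrimes.eq (Submodule.quotEquivOfEqBot (⊥ : Submodule R M) rfl)]
  obtain ⟨N', hN'S, hmax⟩ :=
    (set_has_maximal_iff_noetherian.mpr ‹IsNoetherian R M›) S ⟨⊥, hbot⟩
  have hAssQ : ¬ (associatedPrimes R (M ⧸ N')).Finite := hN'S
  have hne : (associatedPrimes R (M ⧸ N')).Nonempty := by
    by_contra h
    rw [Set.not_nonempty_iff_eq_empty] at h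
    exact hAssQ (h ▸ Set.finite_empty)
  obtain ⟨p, hp⟩ := hne
  obtain ⟨hpp, x, hx⟩ := isAssociatedPrime_iff.mp hp
  have hx0 : x ≠ 0 := by
    intro h
    apply hpp.ne_top
    rw [hx, Ideal.eq_top_iff_one, Submodule.mem_colon_singleton, h, smul_zero]
    exact zero_mem _
  let N'' : Submodule R M := (R ∙ x).comap N'.mkQ
  have hle : N' ≤ N'' := fun y hy => by
    show N'.mkQ y ∈ (R ∙ x)
    rw [Submodule.mkQ_apply, (Submodule.Quotient.mk_eq_zero N').mpr hy]
    exact zero_mem _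
  obtain ⟨y, hy⟩ := N'.mkQ_surjective x
  have hlt : N' < N'' := by
    refine lt_of_le_of_ne hle (fun h => hx0 ?_)
    have hyN'' : y ∈ N'' := by
      show N'.mkQ y ∈ (R ∙ x)
      rw [hy]; exact Submodule.mem_span_singleton_self x
    rw [← h] at hyN''
    rw [← hy, Submodule.mkQ_apply, Submodule.Quotient.mk_eq_zero]
    exact hyN''
  have hN'' : (associatedPrimes R (M ⧸ N'')).Finite := by
    by_contra h; exact hmax N'' h hlt
  have hmap : N''.map N'.mkQ = (R ∙ x) := by
    rw [Submodule.map_comap_eq, Submodule.range_mkQ, top_inf_eq]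
  have e := Submodule.quotientQuotientEquivQuotient N' N'' hle
  have hsub : associatedPrimes R (M ⧸ N') ⊆ insert p (associatedPrimes R (M ⧸ N'')) := by
    intro q hq
    rcases aux_isAssociatedPrime_or_of_submodule (R ∙ x) hq with h1 | h2
    · exact Set.mem_insert_iff.mpr (Or.inl (aux_isAssociatedPrime_span_singleton_eq
        (hx.trans (by ext; simp [Submodule.mem_colon_singleton,
          Submodule.mem_annihilator_span_singleton])) hpp h1))
    · refine Set.mem_insert_iff.mpr (Or.inr ?_)
      rw [← hmap] at h2
      exact (LinearEquiv.isAssociatedPrime_iff e).mp h2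
  exact hAssQ ((hN''.insert p).subset hsub)

/-- Prime avoidance at the maximal ideal of a noetherian local ring: if the maximal
ideal is not an associated prime of a finite module `N`, then some element of the
maximal ideal is regular on `N`. -/
lemma aux_exists_regular_of_not_assoc (A N : Type*) [CommRing A] [IsLocalRing A]
    [IsNoetherianRing A] [AddCommGroup N] [Module A N] [Module.Finite A N]
    (h : ¬ IsAssociatedPrime (maximalIdeal A) N) :
    ∃ b ∈ maximalIdeal A, IsSMulRegular N b := by
  by_contra hc
  push_neg at hc
  have hsub : (maximalIdeal A : Set A) ⊆ ⋃ p ∈ associatedPrimes A N, (p : Set A) := by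
    rw [biUnion_associatedPrimes_eq_compl_regular A N]
    intro b hb
    exact hc b hb
  have hfin : (associatedPrimes A N).Finite := aux_associatedPrimes_finite A N
  have hsub' : (maximalIdeal A : Set A) ⊆ ⋃ p ∈ hfin.toFinset, ((id p : Ideal A) : Set A) := by
    simpa using hsub
  have hprime : ∀ p ∈ hfin.toFinset, p ≠ (⊥ : Ideal A) → p ≠ (⊥ : Ideal A) →
      (id p : Ideal A).IsPrime := by
    intro p hp _ _
    exact ((Set.Finite.mem_toFinset hfin).mp hp).isPrime
  obtain ⟨p, hpmem, hple⟩ :=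
    (Ideal.subset_union_prime (⊥ : Ideal A) (⊥ : Ideal A) hprime).mp hsub'
  have hpass : IsAssociatedPrime p N := (Set.Finite.mem_toFinset hfin).mp hpmem
  have hpm : p = maximalIdeal A :=
    le_antisymm (le_maximalIdeal hpass.isPrime.ne_top) hple
  exact h (hpm ▸ hpass)

end AuxAssPrimes

open Pointwise

theorem depth_ge_two_of_flat_of_not_associated
    (R A : Type*) [CommRing R] [IsDomain R] [IsDiscreteValuationRing R]
    [CommRing A] [IsLocalRing A] [IsNoetherianRing A]
    [Algebra R A] [IsLocalHom (algebraMap R A)]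
    (M : Type*) [AddCommGroup M] [Module A M] [Module R M] [IsScalarTower R A M]
    [Module.Finite A M] [Module.Flat R M]
    (hz : ¬ IsAssociatedPrime (maximalIdeal A)
      (M ⧸ (((maximalIdeal R).map (algebraMap R A)) • (⊤ : Submodule A M)))) :
    ∃ a b : A, a ∈ maximalIdeal A ∧ b ∈ maximalIdeal A ∧
      RingTheory.Sequence.IsWeaklyRegular M [a, b] := by
  obtain ⟨ϖ, hϖ⟩ := IsDiscreteValuationRing.exists_irreducible R
  set a : A := algebraMap R A ϖ with ha
  have haM : a ∈ maximalIdeal A := by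
    rw [mem_maximalIdeal, mem_nonunits_iff]
    intro hu
    exact hϖ.not_isUnit (isUnit_of_map_unit (algebraMap R A) ϖ hu)
  -- `ϖ` is regular on `M` by flatness over the DVR `R`
  have hregR : IsSMulRegular R ϖ := fun x y hxy =>
    mul_left_cancel₀ hϖ.ne_zero (by simpa [smul_eq_mul] using hxy)
  have hMϖ : IsSMulRegular M ϖ :=
    (LinearEquiv.isSMulRegular_congr (TensorProduct.rid R M) ϖ).mp (hregR.lTensor M)
  have hMa : IsSMulRegular M a := (isSMulRegular_algebraMap_iff (A := A) (r := ϖ)).mpr hMϖ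
  -- the fiber is `M ⧸ aM`
  have hEq : ((maximalIdeal R).map (algebraMap R A)) • (⊤ : Submodule A M)
      = a • (⊤ : Submodule A M) := by
    rw [hϖ.maximalIdeal_eq, Ideal.map_span, Set.image_singleton,
      Submodule.ideal_span_singleton_smul]
  rw [hEq] at hz
  obtain ⟨b, hbM, hbreg⟩ := aux_exists_regular_of_not_assoc A (QuotSMulTop a M) hz
  refine ⟨a, b, haM, hbM, ?_⟩
  exact RingTheory.Sequence.IsWeaklyRegular.cons hMa
    (RingTheory.Sequence.IsWeaklyRegular.cons hbreg
      (RingTheory.Sequence.IsWeaklyRegular.nil A _))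
end

section
/- Let S be a trait (spectrum of a DVR) with fraction field K, and X a scheme locally of finite type and flat over S. Then the associated points of X coincide with the associated points of the generic fiber X_K. In particular X is reduced (resp. integral) if and only if X_K is reduced (resp. integral). -/
/-!
STATEMENT 6: Let `S` be a trait (spectrum of a DVR) with fraction field `K`, and `X` a scheme
locally of finite type and flat over `S`. Then the associated points of `X` coincide with the
associated points of the generic fiber `X_K`. In particular `X` is reduced (resp. integral)
iff `X_K` is reduced (resp. integral).

Affine formulation: let `R` be a DVR with uniformizer `ϖ`, and `A` a finite type flat
(equivalently: `ϖ`-torsion-free) `R`-algebra.  The generic fiber is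
`A ⊗[R] K = A[1/ϖ] = Localization.Away (algebraMap R A ϖ)`.  The statement is that
taking preimages along `A → A[1/ϖ]` is a bijection from the associated primes of `A[1/ϖ]`
onto the associated primes of `A`, and that `A` is reduced (resp. a domain) iff `A[1/ϖ]` is.
-/

open IsLocalization

section Aux
variable {A : Type*} [CommRing A] (π : A) (hπ : π ∈ nonZeroDivisors A)

theorem aux_bijOn [IsNoetherianRing A] (hπ : π ∈ nonZeroDivisors A) :
    Set.BijOn (Ideal.comap (algebraMap A (Localization.Away π)))
      (associatedPrimes (Localization.Away π) (Localization.Away π))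
      (associatedPrimes A A) := by
  haveI : IsNoetherianRing (Localization.Away π) :=
    IsLocalization.isNoetherianRing (Submonoid.powers π) _ inferInstance
  have hsetL : associatedPrimes (Localization.Away π) (Localization.Away π) =
      {I | I.IsPrime ∧ ∃ x : Localization.Away π, I = (Localization.Away π ∙ x).annihilator} := by
    ext I; rw [AssociatedPrimes.mem_iff, isAssociatedPrime_iff]
    simp only [Submodule.bot_colon', Set.mem_setOf_eq]
  have hsetA : associatedPrimes A A = {I | I.IsPrime ∧ ∃ x : A, I = (A ∙ x).annihilator} := by
    ext I; rw [AssociatedPrimes.mem_iff, isAssociatedPrime_iff]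
    simp only [Submodule.bot_colon', Set.mem_setOf_eq]
  rw [hsetL, hsetA]
  set L := Localization.Away π with hL
  set f := algebraMap A L with hf
  have hM : Submonoid.powers π ≤ nonZeroDivisors A := Submonoid.powers_le.mpr hπ
  refine ⟨?_, ?_, ?_⟩
  · -- MapsTo
    rintro q ⟨hq, x, rfl⟩
    obtain ⟨a, s, rfl⟩ := IsLocalization.exists_mk'_eq (Submonoid.powers π) x
    have key : Ideal.comap f ((L ∙ IsLocalization.mk' L a s).annihilator)
        = (A ∙ a).annihilator := by
      ext b
      simp only [Ideal.mem_comap, Submodule.mem_annihilator_span_singleton, smul_eq_mul]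
      rw [show f b * IsLocalization.mk' L a s = IsLocalization.mk' L (b * a) s by
        rw [← IsLocalization.mk'_one (M := Submonoid.powers π) L b, ← IsLocalization.mk'_mul,
          one_mul]]
      rw [IsLocalization.mk'_eq_zero_iff]
      constructor
      · rintro ⟨m, hm⟩
        exact (mem_nonZeroDivisors_iff_right.mp (hM m.2)) _ (by rw [mul_comm] at hm; exact hm)
      · intro h
        exact ⟨1, by simp [h]⟩
    haveI := hq
    exact ⟨key ▸ Ideal.comap_isPrime f _, a, key⟩
  · -- InjOn
    intro q₁ _ q₂ _ h
    have := IsLocalization.map_comap (Submonoid.powers π) L q₁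
    rw [← IsLocalization.map_comap (Submonoid.powers π) L q₁,
      ← IsLocalization.map_comap (Submonoid.powers π) L q₂]
    exact congrArg (Ideal.map f) h
  · -- SurjOn
    rintro p ⟨hp, a, rfl⟩
    have ha : a ≠ 0 := by
      rintro rfl
      exact hp.ne_top (by simp [Submodule.annihilator_eq_top_iff])
    have hπp : π ∉ (A ∙ a).annihilator := by
      rw [Submodule.mem_annihilator_span_singleton, smul_eq_mul]
      intro h
      exact ha (mem_nonZeroDivisors_iff_right.mp hπ a (by rwa [mul_comm]))
    have hd : Disjoint ((Submonoid.powers π : Submonoid A) : Set A)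
        ((A ∙ a).annihilator : Set A) := by
      rw [Set.disjoint_left]
      rintro x ⟨n, rfl⟩ hx
      exact hπp (hp.mem_of_pow_mem n hx)
    have hq : (Ideal.map f ((A ∙ a).annihilator)).IsPrime :=
      IsLocalization.isPrime_of_isPrime_disjoint (Submonoid.powers π) L _ hp hd
    have hcomap := IsLocalization.comap_map_of_isPrime_disjoint (Submonoid.powers π) L
      (I := (A ∙ a).annihilator) hp hd
    have hann : Ideal.map f ((A ∙ a).annihilator) = (L ∙ f a).annihilator := by
      apply le_antisymm
      · rw [Ideal.map_le_iff_le_comap]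
        intro b hb
        rw [Submodule.mem_annihilator_span_singleton, smul_eq_mul] at hb
        rw [Ideal.mem_comap, Submodule.mem_annihilator_span_singleton, smul_eq_mul,
          ← map_mul, hb, map_zero]
      · intro x hx
        rw [Submodule.mem_annihilator_span_singleton, smul_eq_mul] at hx
        obtain ⟨b, s, rfl⟩ := IsLocalization.exists_mk'_eq (Submonoid.powers π) x
        have : IsLocalization.mk' L (b * a) s = 0 := by
          rw [show IsLocalization.mk' L (b * a) s = IsLocalization.mk' L b s * f a by
            rw [← IsLocalization.mk'_one (M := Submonoid.powers π) L a,
              ← IsLocalization.mk'_mul, mul_one], hx]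
        rw [IsLocalization.mk'_eq_zero_iff] at this
        obtain ⟨m, hm⟩ := this
        have hba : b * a = 0 := (mem_nonZeroDivisors_iff_right.mp (hM m.2)) _ (by rw [mul_comm] at hm; exact hm)
        have hbp : b ∈ (A ∙ a).annihilator := by
          rw [Submodule.mem_annihilator_span_singleton, smul_eq_mul]; exact hba
        rw [IsLocalization.mk'_eq_mul_mk'_one]
        exact Ideal.mul_mem_right _ _ (Ideal.mem_map_of_mem f hbp)
    exact ⟨Ideal.map f ((A ∙ a).annihilator), ⟨hann ▸ hq, f a, hann⟩, hcomap⟩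

end Aux

section Aux2
variable {A : Type*} [CommRing A] {π : A}

theorem aux_reduced (hπ : π ∈ nonZeroDivisors A) :
    IsReduced A ↔ IsReduced (Localization.Away π) := by
  have hM : Submonoid.powers π ≤ nonZeroDivisors A := Submonoid.powers_le.mpr hπ
  constructor
  · intro h
    constructor
    intro x hx
    obtain ⟨a, s, rfl⟩ := IsLocalization.exists_mk'_eq (Submonoid.powers π) x
    obtain ⟨n, hn⟩ := hx
    rw [IsLocalization.mk'_eq_zero_iff]
    cases n with
    | zero =>
      simp only [pow_zero] at hn
      have h10 : (1 : A) = 0 := IsLocalization.injective (Localization.Away π) hM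
        (show algebraMap A (Localization.Away π) 1 = algebraMap A (Localization.Away π) 0 by
          rw [map_one, map_zero]; exact hn)
      have : Subsingleton A := subsingleton_of_zero_eq_one h10.symm
      exact ⟨1, Subsingleton.elim _ _⟩
    | succ n =>
      have hpow : IsLocalization.mk' (Localization.Away π) (a ^ (n+1)) (s ^ (n+1)) = 0 := by
        rw [IsLocalization.mk'_pow, hn]
      rw [IsLocalization.mk'_eq_zero_iff] at hpow
      obtain ⟨m, hm⟩ := hpow
      obtain ⟨k, hk⟩ := m.2
      replace hm : π ^ k * a ^ (n + 1) = 0 := by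
        rw [show (π ^ k : A) = (m : A) from hk]; exact hm
      have : (π ^ k * a) ^ (n + 1) = 0 := by
        rw [mul_pow, ← pow_mul]
        calc π ^ (k * (n+1)) * a ^ (n+1) = π ^ (k * n) * (π ^ k * a ^ (n+1)) := by ring
        _ = 0 := by rw [hm, mul_zero]
      have h0 : π ^ k * a = 0 := h.eq_zero _ ⟨n + 1, this⟩
      exact ⟨⟨π ^ k, k, rfl⟩, h0⟩
  · intro h
    exact isReduced_of_injective (algebraMap A (Localization.Away π))
      (IsLocalization.injective _ hM)

theorem aux_domain (hπ : π ∈ nonZeroDivisors A) :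
    IsDomain A ↔ IsDomain (Localization.Away π) := by
  have hM : Submonoid.powers π ≤ nonZeroDivisors A := Submonoid.powers_le.mpr hπ
  constructor
  · intro h
    exact IsLocalization.isDomain_of_le_nonZeroDivisors (R := A)
      (S := Localization.Away π) hM
  · intro h
    exact Function.Injective.isDomain (algebraMap A (Localization.Away π))
      (IsLocalization.injective _ hM)

end Aux2

theorem aux_regular (R : Type) [CommRing R] [IsDomain R]
    (ϖ : R) (hϖ : ϖ ≠ 0)
    (A : Type) [CommRing A] [Algebra R A] [Module.Flat R A] :
    algebraMap R A ϖ ∈ nonZeroDivisors A := by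
  have hR : IsSMulRegular R ϖ := fun x y h => by
    exact mul_left_cancel₀ hϖ (by simpa [smul_eq_mul] using h)
  have hA : IsSMulRegular A ϖ := by
    have h1 : IsSMulRegular (TensorProduct R A R) ϖ := hR.lTensor A
    exact h1.of_injective (TensorProduct.rid R A).symm.toLinearMap
      (TensorProduct.rid R A).symm.injective
  have hA' : IsSMulRegular A (algebraMap R A ϖ) :=
    (isSMulRegular_algebraMap_iff (A := A) (M := A) (r := ϖ)).mpr hA
  rw [mem_nonZeroDivisors_iff_right]
  intro x hx
  exact hA' (by simpa [smul_eq_mul, mul_comm] using hx)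

theorem associated_points_eq_associated_points_of_generic_fiber
    (R : Type) [CommRing R] [IsDomain R] [IsDiscreteValuationRing R]
    (ϖ : R) (hϖ : Irreducible ϖ)
    (A : Type) [CommRing A] [Algebra R A] [Algebra.FiniteType R A] [Module.Flat R A] :
    Set.BijOn (Ideal.comap (algebraMap A (Localization.Away (algebraMap R A ϖ))))
        (associatedPrimes (Localization.Away (algebraMap R A ϖ))
          (Localization.Away (algebraMap R A ϖ)))
        (associatedPrimes A A) ∧
      (IsReduced A ↔ IsReduced (Localization.Away (algebraMap R A ϖ))) ∧
      (IsDomain A ↔ IsDomain (Localization.Away (algebraMap R A ϖ))) := by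
  have hreg : algebraMap R A ϖ ∈ nonZeroDivisors A := aux_regular R ϖ hϖ.ne_zero A
  haveI := Algebra.FiniteType.isNoetherianRing R A
  exact ⟨aux_bijOn _ hreg, aux_reduced hreg, aux_domain hreg⟩
end

section
/- Let S be a locally noetherian scheme, U ⊆ S a schematically dense open, and S' → S a U-admissible blow-up. Then the preimage U' of U in S' is schematically dense in S'. -/
/-!
STATEMENT 11: Let `S` be a locally noetherian scheme, `U ⊆ S` a schematically dense open,
and `S' → S` a `U`-admissible blow-up. Then the preimage `U'` of `U` in `S'` is
schematically dense in `S'`.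

An open `U` of a scheme `S` is schematically dense iff the open immersion `U → S` is
schematically dominant, i.e. for every open `V` of `S` the restriction map
`O_S(V) → O_S(V ⊓ U)` is injective.  As in the file for STATEMENT 10, a `U`-admissible
blow-up is encoded by its center (a closed subscheme disjoint from `U`) and the universal
property of blow-ups.
-/

open AlgebraicGeometry CategoryTheory CategoryTheory.Limits

/-- An open subset `U` of a scheme `S` is schematically dense if all the restriction maps
`O_S(V) → O_S(V ⊓ U)` are injective. -/
def SchematicallyDense (S : Scheme) (U : S.Opens) : Prop :=
  ∀ V : S.Opens,
    Function.Injective (S.presheaf.map (homOfLE (inf_le_left : V ⊓ U ≤ V)).op)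

/-- A closed immersion is an effective Cartier divisor if at each point of its image the
kernel of the map on stalks is generated by a single nonzerodivisor. -/
def IsEffectiveCartierDivisor {D Y : Scheme} (i : D ⟶ Y) : Prop :=
  IsClosedImmersion i ∧ ∀ d : D,
    ∃ r : Y.presheaf.stalk (i.base d), r ∈ nonZeroDivisors (Y.presheaf.stalk (i.base d)) ∧
      RingHom.ker (i.stalkMap d).hom = Ideal.span {r}

/-- A `U`-admissible blow-up of a scheme `S`: the blow-up of a closed subscheme
(center) `Z ↪ S` disjoint from `U`, characterized by the universal property of blow-ups. -/
structure AdmissibleBlowup (S : Scheme) (U : S.Opens) where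
  total : Scheme
  π : total ⟶ S
  center : Scheme
  ι : center ⟶ S
  isClosedImmersion : IsClosedImmersion ι
  admissible : ∀ z : center, ι.base z ∉ U
  cartier : IsEffectiveCartierDivisor (pullback.snd ι π)
  universal : ∀ {Y : Scheme} (f : Y ⟶ S),
    IsEffectiveCartierDivisor (pullback.snd ι f) → ∃! g : Y ⟶ total, g ≫ π = f

open TopologicalSpace

namespace AuxBlowup

lemma res_res {S : Scheme} {V1 V2 V3 : S.Opens} (h12 : V1 ≤ V2) (h23 : V2 ≤ V3)
    (c : Γ(S, V3)) :
    S.presheaf.map (homOfLE h12).op (S.presheaf.map (homOfLE h23).op c)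
      = S.presheaf.map (homOfLE (h12.trans h23)).op c := by
  have key : S.presheaf.map (homOfLE (h12.trans h23)).op =
      S.presheaf.map (homOfLE h23).op ≫ S.presheaf.map (homOfLE h12).op := by
    rw [← Functor.map_comp]
    congr 1
  rw [key]
  rfl

lemma dense_pair {S : Scheme} {U : S.Opens} (hU : SchematicallyDense S U)
    {V V' : S.Opens} (h : V' ≤ V) (h2 : V ⊓ U ≤ V') :
    Function.Injective (S.presheaf.map (homOfLE h).op) := by
  intro a b hab
  apply hU V
  have key' : ∀ c, S.presheaf.map (homOfLE (inf_le_left : V ⊓ U ≤ V)).op c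
      = S.presheaf.map (homOfLE h2).op (S.presheaf.map (homOfLE h).op c) := by
    intro c
    rw [res_res h2 h c]
  rw [key' a, key' b, hab]

lemma dense_pullback {X Y : Scheme} (g : X ⟶ Y) [IsOpenImmersion g] {U : Y.Opens}
    (hU : SchematicallyDense Y U) : SchematicallyDense X (g ⁻¹ᵁ U) := by
  intro V a b hab
  have himg : g ''ᵁ (V ⊓ g ⁻¹ᵁ U) ≤ g ''ᵁ V := by
    apply g.image_mono
    exact inf_le_left
  have h2 : (g ''ᵁ V) ⊓ U ≤ g ''ᵁ (V ⊓ g ⁻¹ᵁ U) := by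
    rintro y ⟨⟨x, hxV, rfl⟩, hyU⟩
    exact ⟨x, ⟨hxV, hyU⟩, rfl⟩
  have inj := dense_pair hU himg h2
  have nat : ∀ c : Γ(X, V), (g.appIso (V ⊓ g ⁻¹ᵁ U)).inv
      (X.presheaf.map (homOfLE (inf_le_left : V ⊓ g ⁻¹ᵁ U ≤ V)).op c)
      = Y.presheaf.map (homOfLE himg).op ((g.appIso V).inv c) := by
    intro c
    have h3 := ConcreteCategory.congr_hom
      (Scheme.Hom.appIso_inv_naturality g
        ((homOfLE (inf_le_left : V ⊓ g ⁻¹ᵁ U ≤ V)).op)) c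
    refine Eq.trans ?_ (h3.trans ?_)
    · rfl
    · show (Y.presheaf.map _) ((g.appIso V).inv c) = _
      have he : (Scheme.Hom.opensFunctor g).op.map
            (homOfLE (inf_le_left : V ⊓ g ⁻¹ᵁ U ≤ V)).op = (homOfLE himg).op :=
        Subsingleton.elim _ _
      rw [he]
  have hinv : (g.appIso (V ⊓ g ⁻¹ᵁ U)).inv
        (X.presheaf.map (homOfLE (inf_le_left : V ⊓ g ⁻¹ᵁ U ≤ V)).op a)
      = (g.appIso (V ⊓ g ⁻¹ᵁ U)).inv
        (X.presheaf.map (homOfLE (inf_le_left : V ⊓ g ⁻¹ᵁ U ≤ V)).op b) := by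
    rw [hab]
  rw [nat a, nat b] at hinv
  have hi := inj hinv
  calc a = (g.appIso V).hom ((g.appIso V).inv a) :=
        (Iso.inv_hom_id_apply (C := CommRingCat) (g.appIso V) a).symm
    _ = (g.appIso V).hom ((g.appIso V).inv b) := by rw [hi]
    _ = b := Iso.inv_hom_id_apply (C := CommRingCat) (g.appIso V) b

lemma isEmpty_pullback {Xc Y S : Scheme} (i : Xc ⟶ S) (f : Y ⟶ S)
    (hdisj : ∀ (z : Xc) (y : Y), i.base z ≠ f.base y) : IsEmpty ↑(pullback i f) := by
  constructor
  intro p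
  refine hdisj ((pullback.fst i f).base p) ((pullback.snd i f).base p) ?_
  rw [← Scheme.Hom.comp_apply, ← Scheme.Hom.comp_apply, pullback.condition]

lemma cartier_of_disjoint {Xc Y S : Scheme} (i : Xc ⟶ S) [IsClosedImmersion i] (f : Y ⟶ S)
    (hdisj : ∀ (z : Xc) (y : Y), i.base z ≠ f.base y) :
    IsEffectiveCartierDivisor (pullback.snd i f) := by
  have hE := isEmpty_pullback i f hdisj
  have hsnd : IsClosedImmersion (pullback.snd i f) :=
    inferInstance
  exact ⟨hsnd, fun d => (hE.false d).elim⟩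

lemma app_surjective {D Y : Scheme} (i : D ⟶ Y) [IsClosedImmersion i] {A : Y.Opens}
    (hA : IsAffineOpen A) : Function.Surjective (i.app A) := by
  haveI : IsAffine A.toScheme := hA
  haveI hres : IsClosedImmersion (i ∣_ A) :=
    IsZariskiLocalAtTarget.restrict (P := @IsClosedImmersion) ‹IsClosedImmersion i› A
  have hsurj := (IsClosedImmersion.isAffine_surjective_of_isAffine (i ∣_ A)).2
  rw [Scheme.Hom.appTop, morphismRestrict_app] at hsurj
  set m := D.presheaf.map (eqToHom (image_morphismRestrict_preimage i A ⊤)).op with hm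
  have hbij := (ConcreteCategory.bijective_of_isIso m)
  have hsurj' : Function.Surjective (i.app (A.ι ''ᵁ ⊤)) := by
    intro y
    obtain ⟨x, hx⟩ := hsurj (m y)
    exact ⟨x, hbij.injective hx⟩
  have e1 : A.ι ''ᵁ ⊤ = A := Scheme.Opens.ι_image_top A
  rw [e1] at hsurj'
  exact hsurj'

end AuxBlowup

open AuxBlowup


theorem preimage_schematically_dense_of_admissible_blowup
    (S : Scheme) [IsLocallyNoetherian S] (U : S.Opens)
    (hU : SchematicallyDense S U)
    (B : AdmissibleBlowup S U) :
    SchematicallyDense B.total (B.π ⁻¹ᵁ U) := by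
  obtain ⟨T, π, Z, ι, hci, hadm, hcart, huniv⟩ := B
  haveI := hci
  dsimp only at *
  -- the complement of the center
  have hWcl : IsClosed (Set.range ι.base) := ι.isClosedEmbedding.isClosed_range
  set W : S.Opens := ⟨(Set.range ι.base)ᶜ, hWcl.isOpen_compl⟩ with hWdef
  -- π is an isomorphism over W
  have hd1 : ∀ (z : Z) (y : W.toScheme), ι.base z ≠ W.ι.base y := by
    intro z y h
    have hy : W.ι.base y ∈ Set.range W.ι.base := Set.mem_range_self y
    rw [Scheme.Opens.range_ι] at hy
    exact hy ⟨z, h⟩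
  obtain ⟨h, hh, -⟩ := huniv W.ι (cartier_of_disjoint ι W.ι hd1)
  have hrange : Set.range h.base ⊆ ((π ⁻¹ᵁ W) : Set T) := by
    rintro _ ⟨y, rfl⟩
    show π.base (h.base y) ∈ (W : Set S)
    rw [← Scheme.Hom.comp_apply, hh]
    have hy : W.ι.base y ∈ Set.range W.ι.base := Set.mem_range_self y
    rwa [Scheme.Opens.range_ι] at hy
  have hliftrange : Set.range h.base ⊆ Set.range (π ⁻¹ᵁ W).ι.base := by
    rwa [Scheme.Opens.range_ι]
  set h' := IsOpenImmersion.lift (π ⁻¹ᵁ W).ι h hliftrange with hh'def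
  have hfac : h' ≫ (π ⁻¹ᵁ W).ι = h := IsOpenImmersion.lift_fac _ _ _
  set q := π.resLE W (π ⁻¹ᵁ W) le_rfl with hqdef
  have hq : q ≫ W.ι = (π ⁻¹ᵁ W).ι ≫ π := Scheme.Hom.resLE_comp_ι _ _
  have e1 : h' ≫ q = 𝟙 _ := by
    rw [← cancel_mono W.ι, Category.assoc, hq, ← Category.assoc, hfac, hh, Category.id_comp]
  have hd2 : ∀ (z : Z) (y : (π ⁻¹ᵁ W).toScheme), ι.base z ≠ ((π ⁻¹ᵁ W).ι ≫ π).base y := by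
    intro z y hzy
    have hy : (π ⁻¹ᵁ W).ι.base y ∈ Set.range (π ⁻¹ᵁ W).ι.base := Set.mem_range_self y
    rw [Scheme.Opens.range_ι] at hy
    have : π.base ((π ⁻¹ᵁ W).ι.base y) ∈ (W : Set S) := hy
    rw [← Scheme.Hom.comp_apply] at this
    rw [← hzy] at this
    exact this ⟨z, rfl⟩
  obtain ⟨k, hk, hkuniq⟩ := huniv ((π ⁻¹ᵁ W).ι ≫ π) (cartier_of_disjoint ι _ hd2)
  have ha : (π ⁻¹ᵁ W).ι = k := hkuniq _ rfl
  have hb : q ≫ h = k := hkuniq _ (by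
    show (q ≫ h) ≫ π = (π ⁻¹ᵁ W).ι ≫ π
    rw [Category.assoc, hh, hq])
  have e2 : q ≫ h' = 𝟙 _ := by
    rw [← cancel_mono (π ⁻¹ᵁ W).ι, Category.assoc, hfac, hb, ← ha, Category.id_comp]
  haveI : IsIso q := ⟨h', e2, e1⟩
  -- density transfers to the open part of the blowup
  have densW : SchematicallyDense W.toScheme (W.ι ⁻¹ᵁ U) := dense_pullback W.ι hU
  have densWT0 : SchematicallyDense (π ⁻¹ᵁ W).toScheme (q ⁻¹ᵁ (W.ι ⁻¹ᵁ U)) :=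
    dense_pullback q densW
  have hUW : q ⁻¹ᵁ (W.ι ⁻¹ᵁ U) = (π ⁻¹ᵁ W).ι ⁻¹ᵁ (π ⁻¹ᵁ U) := by
    rw [← Scheme.Hom.comp_preimage, hq, Scheme.Hom.comp_preimage]
  rw [hUW] at densWT0
  -- main argument
  intro V' a b hab
  rw [← sub_eq_zero]
  set s := a - b with hsdef
  have hs : T.presheaf.map (homOfLE (inf_le_left : V' ⊓ (π ⁻¹ᵁ U) ≤ V')).op s = 0 := by
    rw [hsdef, map_sub, hab, sub_self]
  -- germs vanish over W
  have hgermW : ∀ (x : T) (hx1 : x ∈ V') (hx2 : x ∈ π ⁻¹ᵁ W),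
      T.presheaf.germ V' x hx1 s = 0 := by
    intro x hx1 hx2
    set j := (π ⁻¹ᵁ W).ι with hjdef
    set x' : (π ⁻¹ᵁ W).toScheme := ⟨x, hx2⟩ with hx'def
    have hjx : j.base x' = x := rfl
    have hx1' : j.base x' ∈ V' := by rw [hjx]; exact hx1
    have ht : j.app V' s = 0 := by
      apply densWT0 (j ⁻¹ᵁ V')
      rw [map_zero]
      have hle : (j ⁻¹ᵁ V') ⊓ (j ⁻¹ᵁ (π ⁻¹ᵁ U)) ≤ j ⁻¹ᵁ (V' ⊓ π ⁻¹ᵁ U) := by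
        rintro t ⟨ht1, ht2⟩
        exact ⟨ht1, ht2⟩
      have step1 : (π ⁻¹ᵁ W).toScheme.presheaf.map
            (homOfLE (inf_le_left : (j ⁻¹ᵁ V') ⊓ (j ⁻¹ᵁ (π ⁻¹ᵁ U)) ≤ j ⁻¹ᵁ V')).op
            (j.app V' s)
          = j.appLE V' ((j ⁻¹ᵁ V') ⊓ (j ⁻¹ᵁ (π ⁻¹ᵁ U)))
              (le_trans inf_le_left le_rfl) s := by
        rw [Scheme.Hom.app_eq_appLE]
        exact ConcreteCategory.congr_hom (Scheme.Hom.appLE_map j le_rfl _) s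
      rw [step1]
      have step2 : j.appLE V' ((j ⁻¹ᵁ V') ⊓ (j ⁻¹ᵁ (π ⁻¹ᵁ U)))
            (le_trans inf_le_left le_rfl) s
          = j.appLE (V' ⊓ π ⁻¹ᵁ U) ((j ⁻¹ᵁ V') ⊓ (j ⁻¹ᵁ (π ⁻¹ᵁ U))) hle
              (T.presheaf.map (homOfLE (inf_le_left : V' ⊓ (π ⁻¹ᵁ U) ≤ V')).op s) := by
        have := ConcreteCategory.congr_hom
          (Scheme.Hom.map_appLE j hle (homOfLE (inf_le_left : V' ⊓ (π ⁻¹ᵁ U) ≤ V')).op) s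
        refine Eq.trans ?_ this.symm
        congr 1
      rw [step2, hs, map_zero]
    have happ := Scheme.Hom.germ_stalkMap_apply j V' x' hx1' s
    rw [ht, map_zero] at happ
    have hinj := (ConcreteCategory.bijective_of_isIso (j.stalkMap x')).injective
    have h0 : j.stalkMap x' 0 = 0 := map_zero _
    exact hinj (happ.trans h0.symm)
  -- conclude by checking germs at every point
  apply TopCat.Presheaf.section_ext T.sheaf V'
  intro x hx
  refine (?_ : T.presheaf.germ V' x hx s = 0).trans (map_zero _).symm
  by_cases hxW : x ∈ π ⁻¹ᵁ W
  · exact hgermW x hx hxW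
  · -- x lies over the center
    set E := pullback.snd ι π with hEdef
    haveI hEci : IsClosedImmersion E := hcart.1
    have hxE : x ∈ Set.range E.base := by
      rw [hEdef, Scheme.Pullback.range_snd]
      show π.base x ∈ Set.range ι.base
      by_contra hc
      exact hxW (show π.base x ∈ (W : Set S) from hc)
    obtain ⟨d, hd⟩ := hxE
    subst hd
    obtain ⟨r, hrnz, hker⟩ := hcart.2 d
    -- choose an affine chart
    obtain ⟨_, ⟨A, hAaff, rfl⟩, hxA, hAV⟩ :=
      T.isBasis_affineOpens.exists_subset_of_mem_open hx V'.2
    have hAV' : A ≤ V' := hAV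
    letI := T.presheaf.algebra_section_stalk (⟨E.base d, hxA⟩ : A)
    haveI hloc := hAaff.isLocalization_stalk ⟨E.base d, hxA⟩
    set p := (hAaff.primeIdealOf ⟨E.base d, hxA⟩).asIdeal with hpdef
    have halg : ∀ c : Γ(T, A),
        algebraMap Γ(T, A) (T.presheaf.stalk (E.base d)) c
          = T.presheaf.germ A (E.base d) hxA c := fun _ => rfl
    -- r is in the kernel of the stalk map
    have hrker : E.stalkMap d r = 0 := by
      have hmem : r ∈ RingHom.ker (E.stalkMap d).hom := by
        rw [hker]; exact Ideal.mem_span_singleton_self r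
      exact hmem
    obtain ⟨⟨b0, g0⟩, hbg⟩ := IsLocalization.surj (M := p.primeCompl) r
    -- push to the stalk of the exceptional divisor
    have hdA : d ∈ E ⁻¹ᵁ A := hxA
    have hb0 : (pullback ι π).presheaf.germ (E ⁻¹ᵁ A) d hdA (E.app A b0) = 0 := by
      have h1 := congrArg (E.stalkMap d) hbg
      rw [map_mul, hrker, zero_mul] at h1
      rw [halg b0] at h1
      rw [Scheme.Hom.germ_stalkMap_apply] at h1
      exact h1.symm
    haveI : IsAffineHom E := inferInstance
    have hA2 : IsAffineOpen (E ⁻¹ᵁ A) := hAaff.preimage E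
    letI := (pullback ι π).presheaf.algebra_section_stalk (⟨d, hdA⟩ : (E ⁻¹ᵁ A))
    haveI hloc2 := hA2.isLocalization_stalk ⟨d, hdA⟩
    set q2 := (hA2.primeIdealOf ⟨d, hdA⟩).asIdeal with hq2def
    obtain ⟨m0, hm0⟩ := (IsLocalization.map_eq_zero_iff q2.primeCompl _ _).mp hb0
    obtain ⟨c0, hc0⟩ := app_surjective E hAaff m0
    have hc0unit : IsUnit (T.presheaf.germ A (E.base d) hxA c0) := by
      apply isUnit_of_map_unit (E.stalkMap d).hom
      rw [Scheme.Hom.germ_stalkMap_apply, hc0]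
      exact (IsLocalization.AtPrime.isUnit_to_map_iff
        ((pullback ι π).presheaf.stalk d) q2 (m0 : Γ(pullback ι π, E ⁻¹ᵁ A))).mpr m0.2
    set a0 := c0 * b0 with ha0def
    have ha0app : E.app A a0 = 0 := by
      rw [ha0def, map_mul, hc0, hm0]
    have hunit_g : IsUnit (T.presheaf.germ A (E.base d) hxA (g0 : Γ(T, A))) := by
      rw [← halg]
      exact IsLocalization.map_units _ g0
    set u := T.presheaf.germ A (E.base d) hxA c0 * T.presheaf.germ A (E.base d) hxA (g0 : Γ(T, A))
      with hudef
    have huu : IsUnit u := hc0unit.mul hunit_g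
    have hgermA : T.presheaf.germ A (E.base d) hxA a0 = r * u := by
      rw [ha0def, map_mul, hudef]
      rw [← halg b0, ← hbg, halg (g0 : Γ(T, A))]
      ring
    -- the basic open of a0 avoids the exceptional locus
    set ba := T.basicOpen a0 with hbadef
    have hbaA : ba ≤ A := T.basicOpen_le a0
    have hbaW : ba ≤ π ⁻¹ᵁ W := by
      intro y hy
      by_contra hyW
      have hyE : y ∈ Set.range E.base := by
        rw [hEdef, Scheme.Pullback.range_snd]
        show π.base y ∈ Set.range ι.base
        by_contra hc
        exact hyW (show π.base y ∈ (W : Set S) from hc)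
      obtain ⟨e, he⟩ := hyE
      subst he
      have hyA : E.base e ∈ A := hbaA hy
      have hunit : IsUnit (T.presheaf.germ A (E.base e) hyA a0) :=
        (T.mem_basicOpen a0 (E.base e) hyA).mp hy
      have hzero := hunit.map (E.stalkMap e).hom
      rw [Scheme.Hom.germ_stalkMap_apply, ha0app, map_zero] at hzero
      exact not_isUnit_zero hzero
    -- the restriction of s to the basic open vanishes
    have hbaV : ba ≤ V' := le_trans hbaA hAV'
    have hsba : T.presheaf.map (homOfLE hbaV).op s = 0 := by
      apply TopCat.Presheaf.section_ext T.sheaf ba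
      intro y hy
      refine (?_ : T.presheaf.germ ba y hy (T.presheaf.map (homOfLE hbaV).op s) = 0).trans (map_zero _).symm
      show T.presheaf.germ ba y hy (T.presheaf.map (homOfLE hbaV).op s) = 0
      rw [TopCat.Presheaf.germ_res_apply T.presheaf (homOfLE hbaV) y hy s]
      exact hgermW y (hbaV hy) (hbaW hy)
    haveI hlocba := hAaff.isLocalization_basicOpen a0
    set sA := T.presheaf.map (homOfLE hAV').op s with hsAdef
    have hres0 : algebraMap Γ(T, A) Γ(T, ba) sA = 0 := by
      have hh1 : algebraMap Γ(T, A) Γ(T, ba) sA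
          = T.presheaf.map (homOfLE hbaA).op sA := rfl
      rw [hh1, hsAdef, res_res hbaA hAV' s]
      exact hsba
    obtain ⟨m1, hm1⟩ := (IsLocalization.map_eq_zero_iff (Submonoid.powers a0) _ sA).mp hres0
    obtain ⟨n, hn⟩ := m1.2
    have hfin : T.presheaf.germ A (E.base d) hxA ((m1 : Γ(T, A)) * sA) = 0 := by
      rw [hm1, map_zero]
    rw [← hn, map_mul, map_pow] at hfin
    have hgermsA : T.presheaf.germ A (E.base d) hxA sA
        = T.presheaf.germ V' (E.base d) hx s := by
      rw [hsAdef]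
      exact TopCat.Presheaf.germ_res_apply T.presheaf (homOfLE hAV') (E.base d) hxA s
    rw [hgermsA, hgermA, mul_pow] at hfin
    have hrn : (r ^ n) ∈ nonZeroDivisors (T.presheaf.stalk (E.base d)) := pow_mem hrnz n
    have h0 : (u ^ n * T.presheaf.germ V' (E.base d) hx s) * r ^ n = 0 := by
      rw [← hfin]; ring
    have h1 := hrn.2 _ h0
    exact ((huu.pow n).mul_right_eq_zero).mp h1
end
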